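/- Fix ω ∈ ℝ. For every x < 0, the hypergeometric series ₂F₁(1, 1−iω; 2−iω; −eˣ) = Σ_{n=0}^{∞} [(1)ₙ (1−iω)ₙ / ((2−iω)ₙ · n!)] (−eˣ)ⁿ converges, and the function G(x) = (i e^{(1−iω)x}/(ω+i)) · ₂F₁(1, 1−iω; 2−iω; −eˣ) is differentiable on (−∞, 0) with derivative G′(x) = e^{(1−iω)x}/(eˣ + 1), i.e., G is an antiderivative of the Fourier integrand S(x)e^{-iωx} of the Sigmoid function S(x) = eˣ/(eˣ+1). -/

import Mathlib

open Complex

/-- The Pochhammer (ascending factorial) symbol `(a)ₙ = a(a+1)⋯(a+n-1)` in `ℂ`. -/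
noncomputable def pochhammerC (a : ℂ) (n : ℕ) : ℂ := (ascPochhammer ℂ n).eval a

/-- The `n`-th term of the Gauss hypergeometric series
`₂F₁(1, 1-iω; 2-iω; z) = Σₙ (1)ₙ(1-iω)ₙ zⁿ / ((2-iω)ₙ n!)`. -/
noncomputable def sigmoidHyperTerm (ω : ℝ) (z : ℂ) (n : ℕ) : ℂ :=
  pochhammerC 1 n * pochhammerC (1 - Complex.I * ω) n
    / (pochhammerC (2 - Complex.I * ω) n * (Nat.factorial n)) * z ^ n

lemma pochhammerC_succ (a : ℂ) (n : ℕ) :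
    pochhammerC a (n+1) = pochhammerC a n * (a + n) := ascPochhammer_succ_eval n a

lemma pochhammerC_shift (a : ℂ) (n : ℕ) :
    pochhammerC a n * (a + n) = a * pochhammerC (a+1) n := by
  induction n with
  | zero => simp [pochhammerC]
  | succ n ih =>
    rw [pochhammerC_succ, pochhammerC_succ]
    push_cast
    calc pochhammerC a n * (a + n) * (a + (n+1)) = a * pochhammerC (a+1) n * (a + (n+1)) := by
          rw [show pochhammerC a n * (a + (n:ℂ)) * (a + (n+1)) =
            (pochhammerC a n * (a + n)) * (a + (n+1)) by ring, ih]
      _ = a * (pochhammerC (a+1) n * ((a+1) + n)) := by ring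

lemma pochhammerC_two_ne_zero (ω : ℝ) (n : ℕ) : pochhammerC (2 - Complex.I * ω) n ≠ 0 := by
  induction n with
  | zero => simp [pochhammerC]
  | succ n ih =>
    rw [pochhammerC_succ]
    refine mul_ne_zero ih fun h => ?_
    have hre := congrArg Complex.re h
    simp [Complex.add_re, Complex.sub_re, Complex.mul_re] at hre
    nlinarith [Nat.cast_nonneg (α := ℝ) n]

lemma den_ne_zero (ω : ℝ) (n : ℕ) : ((n : ℂ) + 1 - Complex.I * ω) ≠ 0 := fun h => by
  have hre := congrArg Complex.re h
  simp [Complex.add_re, Complex.sub_re, Complex.mul_re] at hre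
  nlinarith [Nat.cast_nonneg (α := ℝ) n]

lemma den_norm_ge (ω : ℝ) (n : ℕ) : (1:ℝ) ≤ ‖((n:ℂ) + 1 - Complex.I * ω)‖ := by
  have h : ((n:ℂ) + 1 - Complex.I * ω).re = (n:ℝ) + 1 := by simp
  calc (1:ℝ) ≤ |((n:ℂ) + 1 - Complex.I * ω).re| := by
        rw [h, _root_.abs_of_nonneg (by positivity)]; linarith [Nat.cast_nonneg (α := ℝ) n]
    _ ≤ ‖((n:ℂ) + 1 - Complex.I * ω)‖ := Complex.abs_re_le_norm _

lemma sigmoidHyperTerm_eq (ω : ℝ) (z : ℂ) (n : ℕ) :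
    sigmoidHyperTerm ω z n
      = (1 - Complex.I * ω) / ((n : ℂ) + 1 - Complex.I * ω) * z ^ n := by
  have h1 : pochhammerC 1 n = (Nat.factorial n : ℂ) := ascPochhammer_eval_one ℂ n
  have key : pochhammerC (1 - Complex.I * ω) n * ((1 - Complex.I * ω) + n)
      = (1 - Complex.I * ω) * pochhammerC (2 - Complex.I * ω) n := by
    have := pochhammerC_shift (1 - Complex.I * ω) n
    rw [this, show (1 - Complex.I * ω) + 1 = 2 - Complex.I * ω by ring]
  have hfac : (Nat.factorial n : ℂ) ≠ 0 := Nat.cast_ne_zero.2 (Nat.factorial_ne_zero n)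
  have hP2 := pochhammerC_two_ne_zero ω n
  have hden := den_ne_zero ω n
  unfold sigmoidHyperTerm
  rw [h1]
  field_simp
  ring_nf
  ring_nf at key
  linear_combination z ^ n * key

lemma exp_shift (ω : ℝ) (t : ℝ) (n : ℕ) :
    Complex.exp ((1 - Complex.I * ω) * t) * (-Complex.exp t) ^ n
      = (-1:ℂ)^n * Complex.exp (((n:ℂ) + 1 - Complex.I * ω) * t) := by
  rw [neg_pow, ← Complex.exp_nat_mul]
  rw [show Complex.exp ((1 - Complex.I * ω) * t) * ((-1:ℂ)^n * Complex.exp ((n:ℂ) * t))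
    = (-1:ℂ)^n * (Complex.exp ((1 - Complex.I * ω) * t) * Complex.exp ((n:ℂ) * t)) by ring,
    ← Complex.exp_add]
  ring_nf

/-- **Fourier transform of the Sigmoid (paper Thm 3.3).** For fixed `ω ∈ ℝ` and
`x < 0` the hypergeometric series `₂F₁(1, 1-iω; 2-iω; -eˣ)` converges, and
`G(x) = (i e^{(1-iω)x}/(ω+i)) · ₂F₁(1, 1-iω; 2-iω; -eˣ)` is differentiable on
`(-∞, 0)` with derivative `e^{(1-iω)x}/(eˣ+1)`, the Fourier integrand
`S(x) e^{-iωx}` of the Sigmoid `S(x) = eˣ/(eˣ+1)`. -/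
theorem sigmoid_fourier_antideriv (ω : ℝ) :
    ∀ x : ℝ, x < 0 →
      Summable (fun n => sigmoidHyperTerm ω (-Complex.exp x) n)
        ∧ HasDerivAt
            (fun t : ℝ =>
              Complex.I * Complex.exp ((1 - Complex.I * ω) * t) / (ω + Complex.I)
                * ∑' n, sigmoidHyperTerm ω (-Complex.exp t) n)
            (Complex.exp ((1 - Complex.I * ω) * x) / (Complex.exp x + 1)) x := by
  intro x hx
  have hnormz : ∀ y : ℝ, ‖(-Complex.exp y : ℂ)‖ = Real.exp y := by
    intro y; rw [norm_neg, Complex.norm_exp]; simp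
  -- summability of the hypergeometric series for any y < 0
  have hsum : ∀ y : ℝ, y < 0 → Summable (fun n => sigmoidHyperTerm ω (-Complex.exp y) n) := by
    intro y hy
    have hr : Real.exp y < 1 := Real.exp_lt_one_iff.2 hy
    refine Summable.of_norm_bounded
      (g := fun n => ‖(1 - Complex.I * (ω:ℂ))‖ * (Real.exp y) ^ n)
      ((summable_geometric_of_lt_one (Real.exp_pos y).le hr).mul_left _) fun n => ?_
    rw [sigmoidHyperTerm_eq, norm_mul, norm_pow, hnormz]
    refine mul_le_mul_of_nonneg_right ?_ (by positivity)
    rw [norm_div]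
    calc ‖(1 - Complex.I * (ω:ℂ))‖ / ‖((n:ℂ) + 1 - Complex.I * ω)‖
        ≤ ‖(1 - Complex.I * (ω:ℂ))‖ / 1 := by
          apply div_le_div_of_nonneg_left (norm_nonneg _) one_pos (den_norm_ge ω n)
      _ = ‖(1 - Complex.I * (ω:ℂ))‖ := div_one _
  refine ⟨hsum x hx, ?_⟩
  -- the series of antiderivative terms
  set c : ℕ → ℂ := fun n => (n:ℂ) + 1 - Complex.I * ω with hc
  set g : ℕ → ℝ → ℂ := fun n t => (-1:ℂ)^n * Complex.exp (c n * t) / c n with hg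
  set g' : ℕ → ℝ → ℂ := fun n t => (-1:ℂ)^n * Complex.exp (c n * t) with hg'
  have hgnorm : ∀ n (t : ℝ), ‖g' n t‖ = Real.exp ((n + 1) * t) := by
    intro n t
    rw [hg', norm_mul, norm_pow, norm_neg, norm_one, one_pow, one_mul,
      Complex.norm_exp]
    congr 1
    simp [hc, Complex.mul_re]
  -- function equality
  have hfun : ∀ t : ℝ,
      Complex.I * Complex.exp ((1 - Complex.I * ω) * t) / (ω + Complex.I)
        * ∑' n, sigmoidHyperTerm ω (-Complex.exp t) n = ∑' n, g n t := by
    intro t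
    rw [← tsum_mul_left]
    refine tsum_congr fun n => ?_
    rw [sigmoidHyperTerm_eq]
    simp only [hg, hc]
    have hωI : ((ω:ℂ) + Complex.I) ≠ 0 := fun h => by
      have := congrArg Complex.im h; simp at this
    have hIa : Complex.I * (1 - Complex.I * ω) = (ω:ℂ) + Complex.I := by
      rw [mul_sub, mul_one, ← mul_assoc, Complex.I_mul_I]; ring
    calc Complex.I * Complex.exp ((1 - Complex.I * ω) * t) / (ω + Complex.I) *
          ((1 - Complex.I * ω) / ((n:ℂ) + 1 - Complex.I * ω) * (-Complex.exp t) ^ n)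
        = (Complex.I * (1 - Complex.I * ω)) / ((ω:ℂ) + Complex.I) *
            ((Complex.exp ((1 - Complex.I * ω) * t) * (-Complex.exp t) ^ n)
              / ((n:ℂ) + 1 - Complex.I * ω)) := by ring
      _ = (-1:ℂ)^n * Complex.exp (((n:ℂ) + 1 - Complex.I * ω) * t) / ((n:ℂ) + 1 - Complex.I * ω) := by
          rw [hIa, div_self hωI, one_mul, exp_shift ω t n]
  -- derivative of each term
  have hderiv : ∀ n (y : ℝ), HasDerivAt (g n) (g' n y) y := by
    intro n y
    have h1 : HasDerivAt (fun s : ℝ => ((s : ℂ))) 1 y := Complex.ofRealCLM.hasDerivAt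
    have h2 : HasDerivAt (fun s : ℝ => (c n * s : ℂ)) (c n) y := by
      simpa using h1.const_mul (c n)
    have h3 := ((h2.cexp).const_mul ((-1:ℂ)^n)).div_const (c n)
    convert h3 using 1
    · rfl
    field_simp [den_ne_zero ω n, hg', hc]
    ring
  -- apply the series differentiation theorem on Iio (x/2)
  have hx2 : x < x / 2 := by linarith
  have hmem : x ∈ Set.Iio (x/2) := hx2
  have hr2 : Real.exp (x/2) < 1 := Real.exp_lt_one_iff.2 (by linarith)
  have hu : Summable (fun n : ℕ => Real.exp ((n + 1) * (x/2))) := by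
    have : Summable (fun n : ℕ => (Real.exp (x/2)) ^ (n+1)) := by
      simpa [pow_succ, mul_comm] using
        ((summable_geometric_of_lt_one (Real.exp_pos (x/2)).le hr2).mul_left (Real.exp (x/2)))
    refine this.congr fun n => ?_
    rw [← Real.exp_nat_mul]
    push_cast
    ring_nf
  have hg0 : Summable fun n => g n x := by
    refine Summable.of_norm_bounded (g := fun n : ℕ => Real.exp ((n + 1) * x)) ?_ fun n => ?_
    · have : Summable (fun n : ℕ => (Real.exp x) ^ (n+1)) := by
        simpa [pow_succ, mul_comm] using
          ((summable_geometric_of_lt_one (Real.exp_pos x).le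
            (Real.exp_lt_one_iff.2 hx)).mul_left (Real.exp x))
      refine this.congr fun n => ?_
      rw [← Real.exp_nat_mul]; push_cast; ring_nf
    · rw [hg, norm_div]
      calc ‖(-1:ℂ)^n * Complex.exp (c n * x)‖ / ‖c n‖
          ≤ ‖(-1:ℂ)^n * Complex.exp (c n * x)‖ / 1 :=
            div_le_div_of_nonneg_left (norm_nonneg _) one_pos (den_norm_ge ω n)
        _ = Real.exp ((n+1) * x) := by rw [div_one]; exact hgnorm n x
  have hmain : HasDerivAt (fun z : ℝ => ∑' n, g n z) (∑' n, g' n x) x := by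
    refine hasDerivAt_tsum_of_isPreconnected hu isOpen_Iio (isPreconnected_Iio)
      (fun n y _ => hderiv n y) (fun n y hy => ?_) hmem hg0 hmem
    rw [hgnorm]
    apply Real.exp_le_exp.2
    have hy' : y ≤ x/2 := le_of_lt hy
    have : (0:ℝ) ≤ (n:ℝ) + 1 := by positivity
    nlinarith
  -- identify the derivative value
  have hval : (∑' n, g' n x) = Complex.exp ((1 - Complex.I * ω) * x) / (Complex.exp x + 1) := by
    have heq : ∀ n : ℕ, g' n x
        = Complex.exp ((1 - Complex.I * ω) * x) * (-Complex.exp x) ^ n := fun n =>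
      (exp_shift ω x n).symm
    rw [tsum_congr heq, tsum_mul_left, tsum_geometric_of_norm_lt_one (by
      rw [hnormz]; exact Real.exp_lt_one_iff.2 hx)]
    rw [sub_neg_eq_add, div_eq_mul_inv, add_comm (1:ℂ)]
  rw [← hval]
  exact hmain.congr_of_eventuallyEq (Filter.Eventually.of_forall fun t => hfun t)
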